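/- (Theorem 2, probabilistic form.) Consider the linear model Y = Xβ* + ε with Y ∈ ℝ^n, X ∈ ℝ^{n×p}, |supp(β*)| ≤ S, and ε independent mean-zero sub-Gaussian with variance proxy σ². Assume the maximum absolute column sum satisfies ‖X‖₁ ≤ C √n for some constant C > 0, and X satisfies the restricted eigenvalue condition with constant γ > 0 over the cone C(β*). Let α > 2 and λ₀ = σ √(α log p / n). Then with probability at least 1 − 2 n p^{−α/2}, every vector β̂ that is feasible for the constrained ℓ∞ problem with parameter λ₀ and satisfies ‖β̂‖₁ ≤ ‖β*‖₁ obeys ‖β̂ − β*‖₂ ≤ (4Cσ/γ) √(α S log p / n). -/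

import Mathlib

open MeasureTheory ProbabilityTheory Finset

/-- The maximum absolute entry of a vector in `ℝ^n`. -/
noncomputable def linftyNorm {n : ℕ} (v : Fin n → ℝ) : ℝ := ⨆ i, |v i|

/-- The maximum absolute column sum of a matrix `X ∈ ℝ^{n×p}`. -/
noncomputable def colSumNorm {n p : ℕ} (X : Matrix (Fin n) (Fin p) ℝ) : ℝ :=
  ⨆ j, ∑ i, |X i j|

/-- Membership in the cone `C(β*)`: `‖ν_{S₀ᶜ}‖₁ ≤ ‖ν_{S₀}‖₁`, `S₀ = supp(β*)`. -/
def inCone {p : ℕ} (βstar ν : Fin p → ℝ) : Prop :=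
  ∑ j ∈ Finset.univ.filter (fun j => βstar j = 0), |ν j|
    ≤ ∑ j ∈ Finset.univ.filter (fun j => βstar j ≠ 0), |ν j|

/-- Feasibility for the constrained ℓ∞ problem: `(1/√n) ‖Y − Xβ‖_∞ ≤ λ₀`. -/
noncomputable def feasible {n p : ℕ} (Y : Fin n → ℝ) (X : Matrix (Fin n) (Fin p) ℝ)
    (lam₀ : ℝ) (β : Fin p → ℝ) : Prop :=
  (1 / Real.sqrt n) * linftyNorm (fun i => Y i - X.mulVec β i) ≤ lam₀

/-- Theorem 2, probabilistic form: with probability at least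
`1 − 2 n p^{−α/2}`, every feasible `β̂` with `‖β̂‖₁ ≤ ‖β*‖₁` satisfies
`‖β̂ − β*‖₂ ≤ (4Cσ/γ) √(α S log p / n)`. -/
lemma det_bound {n p : ℕ} (hn : 1 ≤ n) (hp : 2 ≤ p)
    {σ : ℝ} (hσ : 0 < σ) (X : Matrix (Fin n) (Fin p) ℝ) (βstar : Fin p → ℝ)
    {S : ℕ} (hsparse : (Finset.univ.filter (fun j => βstar j ≠ 0)).card ≤ S)
    {C : ℝ} (hC : 0 < C) (hcolsum : colSumNorm X ≤ C * Real.sqrt n)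
    {γ : ℝ} (hγ : 0 < γ)
    (hRE : ∀ ν : Fin p → ℝ, inCone βstar ν →
      γ * ∑ j, (ν j) ^ 2 ≤ (1 / (n : ℝ)) * ∑ i, (X.mulVec ν i) ^ 2)
    {α : ℝ} (hα : 2 < α) {lam₀ : ℝ}
    (hlam₀ : lam₀ = σ * Real.sqrt (α * Real.log p / n))
    (Yv : Fin n → ℝ) (e : Fin n → ℝ) (hY : ∀ i, Yv i = X.mulVec βstar i + e i)
    (he : ∀ i, |e i| ≤ Real.sqrt n * lam₀)
    (βhat : Fin p → ℝ) (hfeas : feasible Yv X lam₀ βhat)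
    (hl1 : (∑ j, |βhat j|) ≤ ∑ j, |βstar j|) :
    Real.sqrt (∑ j, (βhat j - βstar j) ^ 2)
      ≤ (4 * C * σ / γ) * Real.sqrt (α * S * Real.log p / n) := by
  have hn0 : (0:ℝ) < n := by exact_mod_cast hn
  have hp1 : (1:ℝ) < p := by
    have : (2:ℕ) ≤ p := hp
    exact_mod_cast lt_of_lt_of_le one_lt_two this
  have hlogp : 0 < Real.log p := Real.log_pos hp1
  have hα0 : (0:ℝ) < α := lt_trans two_pos hα
  have hquot : 0 ≤ α * Real.log p / n := by positivity
  have hlam0 : 0 ≤ lam₀ := by rw [hlam₀]; positivity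
  have hsn : 0 < Real.sqrt n := Real.sqrt_pos.2 hn0
  set ν : Fin p → ℝ := fun j => βhat j - βstar j with hν
  set A := Finset.univ.filter (fun j : Fin p => βstar j ≠ 0) with hA
  set B := Finset.univ.filter (fun j : Fin p => βstar j = 0) with hB
  have hfilter : Finset.univ.filter (fun j : Fin p => ¬ βstar j ≠ 0) = B := by
    rw [hB]; simp [not_not]
  have hsplit : ∀ f : Fin p → ℝ, ∑ j, f j = ∑ j ∈ A, f j + ∑ j ∈ B, f j := by
    intro f
    rw [hA, ← hfilter, Finset.sum_filter_add_sum_filter_not]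
  -- cone membership
  have hBν : ∀ j ∈ B, |βhat j| = |ν j| := by
    intro j hj
    have hj0 : βstar j = 0 := by simpa [hB] using (Finset.mem_filter.1 hj).2
    simp [hν, hj0]
  have hBstar : ∑ j ∈ B, |βstar j| = 0 := by
    apply Finset.sum_eq_zero
    intro j hj
    have hj0 : βstar j = 0 := by simpa [hB] using (Finset.mem_filter.1 hj).2
    simp [hj0]
  have hcone : inCone βstar ν := by
    show ∑ j ∈ B, |ν j| ≤ ∑ j ∈ A, |ν j|
    have h1 := hl1
    rw [hsplit (fun j => |βhat j|), hsplit (fun j => |βstar j|),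
      Finset.sum_congr rfl hBν, hBstar, add_zero] at h1
    have h3 : ∑ j ∈ A, (|βstar j| - |βhat j|) ≤ ∑ j ∈ A, |ν j| := by
      apply Finset.sum_le_sum
      intro j _
      calc |βstar j| - |βhat j| ≤ |βstar j - βhat j| := abs_sub_abs_le_abs_sub _ _
        _ = |ν j| := by rw [hν]; exact (abs_sub_comm _ _)
    rw [Finset.sum_sub_distrib] at h3
    linarith
  -- feasibility / noise bounds
  have hfeas' : linftyNorm (fun i => Yv i - X.mulVec βhat i) ≤ Real.sqrt n * lam₀ := by
    have h := hfeas
    unfold feasible at h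
    rw [one_div, inv_mul_le_iff₀ hsn] at h
    exact h
  have hle_linfty : ∀ i, |Yv i - X.mulVec βhat i|
      ≤ linftyNorm (fun i => Yv i - X.mulVec βhat i) := by
    intro i
    unfold linftyNorm
    exact le_ciSup (f := fun i => |Yv i - X.mulVec βhat i|)
      (Set.Finite.bddAbove (Set.finite_range _)) i
  have hmv0 : X.mulVec ν = X.mulVec βhat - X.mulVec βstar := by
    have hh : ν = βhat - βstar := rfl
    rw [hh, Matrix.mulVec_sub]
  have hXν : ∀ i, |X.mulVec ν i| ≤ 2 * (Real.sqrt n * lam₀) := by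
    intro i
    have hmv : X.mulVec ν i = (X.mulVec βhat i - Yv i) + e i := by
      rw [hmv0]
      simp only [Pi.sub_apply]
      rw [hY i]; ring
    rw [hmv]
    calc |(X.mulVec βhat i - Yv i) + e i| ≤ |X.mulVec βhat i - Yv i| + |e i| := abs_add_le _ _
      _ ≤ Real.sqrt n * lam₀ + Real.sqrt n * lam₀ := by
          refine add_le_add ?_ (he i)
          rw [abs_sub_comm]
          exact le_trans (hle_linfty i) hfeas'
      _ = 2 * (Real.sqrt n * lam₀) := by ring
  -- column sum bound
  have hcol : ∀ j, ∑ i, |X i j| ≤ C * Real.sqrt n := by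
    intro j
    unfold colSumNorm at hcolsum
    exact le_trans (le_ciSup (f := fun j => ∑ i, |X i j|)
      (Set.Finite.bddAbove (Set.finite_range _)) j) hcolsum
  have hsum1 : ∑ i, |X.mulVec ν i| ≤ (C * Real.sqrt n) * ∑ j, |ν j| := by
    calc ∑ i, |X.mulVec ν i| ≤ ∑ i, ∑ j, |X i j * ν j| := by
          apply Finset.sum_le_sum; intro i _
          simpa [Matrix.mulVec, dotProduct] using
            Finset.abs_sum_le_sum_abs (fun j => X i j * ν j) Finset.univ
      _ = ∑ j, (∑ i, |X i j|) * |ν j| := by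
          rw [Finset.sum_comm]
          simp [abs_mul, Finset.sum_mul]
      _ ≤ ∑ j, (C * Real.sqrt n) * |ν j| := by
          apply Finset.sum_le_sum; intro j _
          exact mul_le_mul_of_nonneg_right (hcol j) (abs_nonneg _)
      _ = (C * Real.sqrt n) * ∑ j, |ν j| := by rw [Finset.mul_sum]
  have hsq : ∑ i, (X.mulVec ν i) ^ 2 ≤ (2 * (Real.sqrt n * lam₀)) * ∑ i, |X.mulVec ν i| := by
    rw [Finset.mul_sum]
    apply Finset.sum_le_sum; intro i _
    rw [← sq_abs, pow_two]
    exact mul_le_mul_of_nonneg_right (hXν i) (abs_nonneg _)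
  -- Cauchy-Schwarz
  have hl2 : (0:ℝ) ≤ ∑ j, (ν j)^2 := by positivity
  set t := Real.sqrt (∑ j, (ν j)^2) with ht
  have htnn : 0 ≤ t := Real.sqrt_nonneg _
  have hAcs : ∑ j ∈ A, |ν j| ≤ Real.sqrt S * t := by
    have h1 : (∑ j ∈ A, |ν j|)^2 ≤ (A.card : ℝ) * ∑ j ∈ A, |ν j|^2 :=
      sq_sum_le_card_mul_sum_sq
    have h2 : ∑ j ∈ A, |ν j|^2 ≤ ∑ j, (ν j)^2 := by
      calc ∑ j ∈ A, |ν j|^2 = ∑ j ∈ A, (ν j)^2 := by simp [sq_abs]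
        _ ≤ ∑ j, (ν j)^2 := Finset.sum_le_sum_of_subset_of_nonneg
            (Finset.subset_univ _) (by intros; positivity)
    have hcardS : (A.card : ℝ) ≤ (S : ℝ) := by exact_mod_cast hsparse
    have h3 : (∑ j ∈ A, |ν j|)^2 ≤ (S : ℝ) * ∑ j, (ν j)^2 := by
      refine le_trans h1 (mul_le_mul hcardS h2 ?_ ?_)
      · positivity
      · positivity
    have h4 : (0:ℝ) ≤ ∑ j ∈ A, |ν j| := Finset.sum_nonneg (by intros; positivity)
    have h5 : ∑ j ∈ A, |ν j| ≤ Real.sqrt ((S:ℝ) * ∑ j, (ν j)^2) :=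
      (Real.le_sqrt h4 (by positivity)).2 h3
    rwa [Real.sqrt_mul (by positivity)] at h5
  have hl1ν : ∑ j, |ν j| ≤ 2 * (Real.sqrt S * t) := by
    rw [hsplit (fun j => |ν j|)]
    have hc : ∑ j ∈ B, |ν j| ≤ ∑ j ∈ A, |ν j| := hcone
    linarith
  -- main chain
  have hREν := hRE ν hcone
  have hchain : γ * ∑ j, (ν j)^2 ≤ 4 * C * lam₀ * Real.sqrt S * t := by
    have hnn1 : (0:ℝ) ≤ 1 / (n:ℝ) := by positivity
    calc γ * ∑ j, (ν j)^2 ≤ (1/(n:ℝ)) * ∑ i, (X.mulVec ν i)^2 := hREν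
      _ ≤ (1/(n:ℝ)) * ((2 * (Real.sqrt n * lam₀)) * ((C * Real.sqrt n) * ∑ j, |ν j|)) := by
          refine mul_le_mul_of_nonneg_left ?_ hnn1
          refine le_trans hsq (mul_le_mul_of_nonneg_left hsum1 (by positivity))
      _ = 2 * C * lam₀ * (Real.sqrt n * Real.sqrt n / n) * ∑ j, |ν j| := by ring
      _ = 2 * C * lam₀ * ∑ j, |ν j| := by
          rw [Real.mul_self_sqrt hn0.le, div_self hn0.ne', mul_one]
      _ ≤ 2 * C * lam₀ * (2 * (Real.sqrt S * t)) := by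
          refine mul_le_mul_of_nonneg_left hl1ν (by positivity)
      _ = 4 * C * lam₀ * Real.sqrt S * t := by ring
  have htsq : ∑ j, (ν j)^2 = t^2 := (Real.sq_sqrt hl2).symm
  have hfinal : t ≤ 4 * C * lam₀ * Real.sqrt S / γ := by
    rcases eq_or_lt_of_le htnn with h0 | h0
    · rw [← h0]; positivity
    · have h5 : (γ * t) * t ≤ (4 * C * lam₀ * Real.sqrt S) * t := by nlinarith
      have h6 : γ * t ≤ 4 * C * lam₀ * Real.sqrt S := le_of_mul_le_mul_right h5 h0
      rw [le_div_iff₀ hγ]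
      linarith
  have hrhs : 4 * C * (σ * Real.sqrt (α * Real.log p / n)) * Real.sqrt S / γ
      = (4 * C * σ / γ) * Real.sqrt (α * S * Real.log p / n) := by
    have h1 : Real.sqrt (α * Real.log p / n) * Real.sqrt S
        = Real.sqrt (α * S * Real.log p / n) := by
      rw [← Real.sqrt_mul hquot]
      congr 1; ring
    rw [← h1]; ring
  rw [← hrhs, ← hlam₀]
  exact hfinal

theorem estimation_error_prob_colsum
    {Ω : Type*} [MeasureSpace Ω] [IsProbabilityMeasure (ℙ : Measure Ω)]
    (n p : ℕ) (hn : 1 ≤ n) (hp : 2 ≤ p) (σ : ℝ) (hσ : 0 < σ)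
    (X : Matrix (Fin n) (Fin p) ℝ) (βstar : Fin p → ℝ)
    (S : ℕ) (hS : 0 < S)
    (hsparse : (Finset.univ.filter (fun j => βstar j ≠ 0)).card ≤ S)
    (C : ℝ) (hC : 0 < C)
    (hcolsum : colSumNorm X ≤ C * Real.sqrt n)
    (γ : ℝ) (hγ : 0 < γ)
    (hRE : ∀ ν : Fin p → ℝ, inCone βstar ν →
      γ * ∑ j, (ν j) ^ 2 ≤ (1 / (n : ℝ)) * ∑ i, (X.mulVec ν i) ^ 2)
    (ε : Fin n → Ω → ℝ)
    (hmeas : ∀ i, Measurable (ε i))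
    (hmean : ∀ i, ∫ ω, ε i ω = 0)
    (hindep : iIndepFun ε ℙ)
    (hsub : ∀ i, ∀ t : ℝ, 0 ≤ t →
      ℙ {ω | t < |ε i ω|} ≤ ENNReal.ofReal (2 * Real.exp (-(t ^ 2) / (2 * σ ^ 2))))
    (Y : Ω → Fin n → ℝ)
    (hY : ∀ ω, ∀ i, Y ω i = X.mulVec βstar i + ε i ω)
    (α : ℝ) (hα : 2 < α)
    (lam₀ : ℝ) (hlam₀ : lam₀ = σ * Real.sqrt (α * Real.log p / n)) :
    ENNReal.ofReal (1 - 2 * n * (p : ℝ) ^ (-(α / 2)))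
      ≤ ℙ {ω | ∀ βhat : Fin p → ℝ,
            feasible (Y ω) X lam₀ βhat → (∑ j, |βhat j|) ≤ (∑ j, |βstar j|) →
            Real.sqrt (∑ j, (βhat j - βstar j) ^ 2)
              ≤ (4 * C * σ / γ) * Real.sqrt (α * S * Real.log p / n)} := by
  have hn0 : (0:ℝ) < n := by exact_mod_cast hn
  have hp1 : (1:ℝ) < p := by
    have h2 : (2:ℕ) ≤ p := hp
    exact_mod_cast lt_of_lt_of_le one_lt_two h2
  have hp0 : (0:ℝ) < p := lt_trans one_pos hp1
  have hlogp : 0 < Real.log p := Real.log_pos hp1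
  have hα0 : (0:ℝ) < α := lt_trans two_pos hα
  have hlam0 : 0 ≤ lam₀ := by rw [hlam₀]; positivity
  set T := Real.sqrt n * lam₀ with hT
  have hT0 : 0 ≤ T := by positivity
  have hTsq : T^2 = σ^2 * (α * Real.log p) := by
    rw [hT, hlam₀, mul_pow, mul_pow, Real.sq_sqrt hn0.le, Real.sq_sqrt (by positivity)]
    field_simp
  have hσne : σ ≠ 0 := hσ.ne'
  have hexp : ENNReal.ofReal (2 * Real.exp (-(T^2) / (2*σ^2)))
      = ENNReal.ofReal (2 * (p:ℝ) ^ (-(α/2))) := by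
    congr 2
    rw [Real.rpow_def_of_pos hp0]
    congr 1
    rw [hTsq]
    field_simp
  set E := ⋂ i, {ω : Ω | |ε i ω| ≤ T} with hE
  have hEmeas : MeasurableSet E := by
    apply MeasurableSet.iInter
    intro i
    exact measurableSet_le (hmeas i).abs measurable_const
  have hsubset : E ⊆ {ω | ∀ βhat : Fin p → ℝ,
      feasible (Y ω) X lam₀ βhat → (∑ j, |βhat j|) ≤ (∑ j, |βstar j|) →
      Real.sqrt (∑ j, (βhat j - βstar j) ^ 2)
        ≤ (4 * C * σ / γ) * Real.sqrt (α * S * Real.log p / n)} := by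
    intro ω hω
    rw [hE] at hω
    simp only [Set.mem_iInter, Set.mem_setOf_eq] at hω
    simp only [Set.mem_setOf_eq]
    intro βhat hfeas hl1
    exact det_bound hn hp hσ X βstar hsparse hC hcolsum hγ hRE hα hlam₀ (Y ω)
      (fun i => ε i ω) (fun i => hY ω i) (fun i => hω i) βhat hfeas hl1
  have hcompl : Eᶜ = ⋃ i, {ω | T < |ε i ω|} := by
    rw [hE]
    ext ω
    simp [not_le]
  have hEc : ℙ Eᶜ ≤ ENNReal.ofReal (2 * n * (p:ℝ) ^ (-(α/2))) := by
    rw [hcompl]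
    refine le_trans (measure_iUnion_fintype_le _ _) ?_
    have hterm : ∀ i : Fin n, ℙ {ω | T < |ε i ω|} ≤ ENNReal.ofReal (2 * (p:ℝ)^(-(α/2))) := by
      intro i
      have h := hsub i T hT0
      rwa [hexp] at h
    calc ∑ i : Fin n, ℙ {ω | T < |ε i ω|}
        ≤ ∑ _i : Fin n, ENNReal.ofReal (2 * (p:ℝ)^(-(α/2))) :=
          Finset.sum_le_sum (fun i _ => hterm i)
      _ = (n : ENNReal) * ENNReal.ofReal (2 * (p:ℝ)^(-(α/2))) := by
          simp [Finset.sum_const, nsmul_eq_mul]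
      _ = ENNReal.ofReal (2 * n * (p:ℝ)^(-(α/2))) := by
          rw [← ENNReal.ofReal_natCast n, ← ENNReal.ofReal_mul (by positivity)]
          congr 1
          ring
  have hx0 : (0:ℝ) ≤ 2 * (n:ℝ) * (p:ℝ)^(-(α/2)) := by positivity
  calc ENNReal.ofReal (1 - 2 * n * (p:ℝ) ^ (-(α/2)))
      = ENNReal.ofReal 1 - ENNReal.ofReal (2 * n * (p:ℝ)^(-(α/2))) :=
        ENNReal.ofReal_sub _ hx0
    _ = 1 - ENNReal.ofReal (2 * n * (p:ℝ)^(-(α/2))) := by rw [ENNReal.ofReal_one]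
    _ ≤ 1 - ℙ Eᶜ := tsub_le_tsub_left hEc 1
    _ = ℙ E := by rw [← prob_compl_eq_one_sub hEmeas.compl, compl_compl]
    _ ≤ _ := measure_mono hsubset
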